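/- Let S be an asymptotically compact semiflow on a complete metric space X, and let A ⊆ X be connected with ⋃_{t ≥ t₀} S(t)A bounded for some t₀ > 0. Then the ω-limit set ω(A) is connected. -/

import Mathlib

open Metric Set Filter Topology Bornology

/-- A semiflow on a metric space `X`: a map `S : [0,∞) × X → X`, continuous on
`[0,∞) × X`, with `S 0 x = x` and `S (t+s) x = S t (S s x)` for `t, s ≥ 0`. -/
structure Semiflow (X : Type*) [MetricSpace X] where
  toFun : ℝ → X → X
  continuousOn : ContinuousOn (fun p : ℝ × X => toFun p.1 p.2) (Set.Ici (0:ℝ) ×ˢ Set.univ)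
  map_zero : ∀ x, toFun 0 x = x
  map_add : ∀ (t s : ℝ), 0 ≤ t → 0 ≤ s → ∀ x, toFun (t + s) x = toFun t (toFun s x)

namespace Semiflow

variable {X : Type*} [MetricSpace X] (φ : Semiflow X)

/-- Asymptotic compactness: every bounded sequence `x n`, with times `t n → ∞`,
such that `S (t n) (x n)` is bounded, has a convergent subsequence of images. -/
def AsympCompact : Prop :=
  ∀ (x : ℕ → X) (t : ℕ → ℝ), (∀ n, 0 ≤ t n) →
    IsBounded (Set.range x) → Tendsto t atTop atTop →
    IsBounded (Set.range fun n => φ.toFun (t n) (x n)) →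
    ∃ (y : X) (k : ℕ → ℕ), StrictMono k ∧
      Tendsto (fun n => φ.toFun (t (k n)) (x (k n))) atTop (𝓝 y)

/-- `M` attracts `B`: for every `ε > 0` there is `T > 0` with
`S t B ⊆ B(M,ε)` for all `t > T`. -/
def Attracts (M B : Set X) : Prop :=
  ∀ ε > (0:ℝ), ∃ T > (0:ℝ), ∀ t > T, ∀ x ∈ B, infDist (φ.toFun t x) M < ε

/-- `M` is invariant: `S t M = M` for all `t ≥ 0`. -/
def Invariant (M : Set X) : Prop :=
  ∀ t ≥ (0:ℝ), φ.toFun t '' M = M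

/-- An attractor: a compact invariant set attracting a neighborhood of itself. -/
def IsAttractor (A : Set X) : Prop :=
  IsCompact A ∧ φ.Invariant A ∧ ∃ U : Set X, A ⊆ interior U ∧ φ.Attracts A U

/-- The attraction basin of `A`: points whose orbits converge to `A`. -/
def basin (A : Set X) : Set X :=
  {x | Tendsto (fun t : ℝ => infDist (φ.toFun t x) A) atTop (𝓝 0)}

/-- The ω-limit set of a set `A`. -/
def omegaLimit (A : Set X) : Set X :=
  {y | ∃ (x : ℕ → X) (t : ℕ → ℝ), (∀ n, x n ∈ A) ∧ (∀ n, 0 ≤ t n) ∧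
    Tendsto t atTop atTop ∧ Tendsto (fun n => φ.toFun (t n) (x n)) atTop (𝓝 y)}

/-- A complete trajectory of the semiflow. -/
def IsCompleteTraj (γ : ℝ → X) : Prop :=
  ∀ s t : ℝ, s ≤ t → γ t = φ.toFun (t - s) (γ s)

/-- ω-limit set of a complete trajectory. -/
def trajOmega (γ : ℝ → X) : Set X :=
  {y | ∃ t : ℕ → ℝ, Tendsto t atTop atTop ∧ Tendsto (fun n => γ (t n)) atTop (𝓝 y)}

/-- α-limit set of a complete trajectory. -/
def trajAlpha (γ : ℝ → X) : Set X :=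
  {y | ∃ t : ℕ → ℝ, Tendsto t atTop atBot ∧ Tendsto (fun n => γ (t n)) atTop (𝓝 y)}

/-- The dual repeller of `A` inside `𝒜`. -/
def dualRepeller (𝒜 A : Set X) : Set X :=
  {x ∈ 𝒜 | φ.omegaLimit {x} ∩ A = ∅}

/-- `A` is an attractor of the restricted semiflow on the invariant set `𝒜`:
`A ⊆ 𝒜` is compact, invariant, and attracts a relative neighborhood of itself in `𝒜`. -/
def IsAttractorIn (𝒜 A : Set X) : Prop :=
  A ⊆ 𝒜 ∧ IsCompact A ∧ φ.Invariant A ∧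
    ∃ V : Set X, IsOpen V ∧ A ⊆ V ∧ φ.Attracts A (𝒜 ∩ V)

/-- `M 1, …, M l` is a Morse decomposition of `𝒜` with Morse filtration
`∅ = A 0 ⊊ A 1 ⊊ ⋯ ⊊ A l = 𝒜`. -/
def IsMorseDecompositionWithFiltration (𝒜 : Set X) (l : ℕ) (M A : ℕ → Set X) : Prop :=
  A 0 = (∅ : Set X) ∧ A l = 𝒜 ∧
  (∀ k, 1 ≤ k → k ≤ l → φ.IsAttractorIn 𝒜 (A k)) ∧
  (∀ k, 1 ≤ k → k ≤ l → A (k - 1) ⊂ A k) ∧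
  (∀ k, 1 ≤ k → k ≤ l → M k = A k ∩ φ.dualRepeller 𝒜 (A (k - 1)))

/-- `M 1, …, M l` is a Morse decomposition of `𝒜`. -/
def IsMorseDecomposition (𝒜 : Set X) (l : ℕ) (M : ℕ → Set X) : Prop :=
  ∃ A : ℕ → Set X, φ.IsMorseDecompositionWithFiltration 𝒜 l M A

/-- The Dini derivative of `V` along the semiflow. -/
noncomputable def dini (V : X → ℝ) (x : X) : ℝ :=
  Filter.limsup (fun t : ℝ => (V (φ.toFun t x) - V x) / t) (𝓝[>] (0:ℝ))

end Semiflow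

/-- `A ⊂⊂ B`: the closure of `A` is contained in the interior of `B` and
`dist (A, ∂B) > 0`. -/
def WayInside {X : Type*} [MetricSpace X] (A B : Set X) : Prop :=
  closure A ⊆ interior B ∧ ∃ δ > (0:ℝ), ∀ x ∈ A, ∀ y ∈ frontier B, δ ≤ dist x y

/-- `V` is radially unbounded on the open set `Ω`. -/
def RadiallyUnbounded {X : Type*} [MetricSpace X] (V : X → ℝ) (Ω : Set X) : Prop :=
  ∀ R > (0:ℝ), ∃ B : Set X, IsBounded B ∧ IsClosed B ∧ B ⊆ Ω ∧ WayInside B Ω ∧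
    ∀ x ∈ Ω \ B, R < V x

/-- `F` is a strong deformation retract of `E`. -/
def IsStrongDeformationRetract {X : Type*} [MetricSpace X] (F E : Set X) : Prop :=
  F ⊆ E ∧ ∃ H : ℝ × X → X, ContinuousOn H (Set.Icc (0:ℝ) 1 ×ˢ E) ∧
    (∀ x ∈ E, H (0, x) = x) ∧ (∀ x ∈ E, H (1, x) ∈ F) ∧
    (∀ σ ∈ Set.Icc (0:ℝ) 1, ∀ x ∈ F, H (σ, x) = x) ∧
    (∀ σ ∈ Set.Icc (0:ℝ) 1, ∀ x ∈ E, H (σ, x) ∈ E)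

namespace Semiflow

variable {X : Type*} [MetricSpace X] (φ : Semiflow X)

/-- A Morse–Lyapunov function of the Morse decomposition `M` on `Ω`. -/
def IsMorseLyapunov (Ω : Set X) (l : ℕ) (M : ℕ → Set X) (V : X → ℝ) : Prop :=
  ContinuousOn V Ω ∧
  (∀ k, 1 ≤ k → k ≤ l → ∃ c : ℝ, ∀ x ∈ M k, V x = c) ∧
  (∀ x ∈ Ω \ ⋃ k ∈ Set.Icc 1 l, M k,
    StrictAntiOn (fun t : ℝ => V (φ.toFun t x)) (Set.Ici (0:ℝ)))

/-- A strict Morse–Lyapunov function: the values on the Morse sets are increasing. -/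
def IsStrictMorseLyapunov (Ω : Set X) (l : ℕ) (M : ℕ → Set X) (V : X → ℝ) : Prop :=
  φ.IsMorseLyapunov Ω l M V ∧ ∃ c : ℕ → ℝ,
    (∀ k, 1 ≤ k → k ≤ l → ∀ x ∈ M k, V x = c k) ∧
    (∀ j k, 1 ≤ j → j < k → k ≤ l → c j < c k)

end Semiflow


private lemma extract_aux {X : Type*} [MetricSpace X] (φ : Semiflow X)
    (hac : φ.AsympCompact) (A : Set X)
    (t₀ : ℝ) (ht₀ : 0 < t₀)
    (hbdd : Bornology.IsBounded {y : X | ∃ t ≥ t₀, ∃ x ∈ A, y = φ.toFun t x})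
    (x : ℕ → X) (τ : ℕ → ℝ) (hx : ∀ n, x n ∈ A) (hτ : ∀ n, t₀ ≤ τ n)
    (hτtop : Filter.Tendsto τ Filter.atTop Filter.atTop) :
    ∃ y ∈ φ.omegaLimit A, ∃ k : ℕ → ℕ, StrictMono k ∧
      Filter.Tendsto (fun n => φ.toFun (τ (k n)) (x (k n))) Filter.atTop (nhds y) := by
  have hτ0 : ∀ n, (0:ℝ) ≤ τ n := fun n => le_trans ht₀.le (hτ n)
  have key : ∀ n, φ.toFun (τ n - t₀) (φ.toFun t₀ (x n)) = φ.toFun (τ n) (x n) := by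
    intro n
    rw [← φ.map_add _ _ (by linarith [hτ n]) ht₀.le, sub_add_cancel]
  obtain ⟨y, k, hk, hky⟩ := hac (fun n => φ.toFun t₀ (x n)) (fun n => τ n - t₀)
    (fun n => sub_nonneg.2 (hτ n))
    (hbdd.subset (by rintro _ ⟨n, rfl⟩; exact ⟨t₀, le_refl _, x n, hx n, rfl⟩))
    (by simpa [sub_eq_add_neg] using tendsto_atTop_add_const_right Filter.atTop (-t₀) hτtop)
    (hbdd.subset (by rintro _ ⟨n, rfl⟩; exact ⟨τ n, hτ n, x n, hx n, by exact key n⟩))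
  simp_rw [key] at hky
  exact ⟨y, ⟨fun n => x (k n), fun n => τ (k n), fun n => hx _, fun n => hτ0 _,
    hτtop.comp hk.tendsto_atTop, hky⟩, k, hk, hky⟩

/-- If `A` is connected and `⋃_{t ≥ t₀} S t A` is bounded for some `t₀ > 0`,
then `ω(A)` is connected. -/
theorem stmt2 {X : Type*} [MetricSpace X] [CompleteSpace X] (φ : Semiflow X)
    (hac : φ.AsympCompact) (A : Set X) (hA : IsConnected A)
    (t₀ : ℝ) (ht₀ : 0 < t₀)
    (hbdd : Bornology.IsBounded {y : X | ∃ t ≥ t₀, ∃ x ∈ A, y = φ.toFun t x}) :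
    IsConnected (φ.omegaLimit A) := by
  set ω := φ.omegaLimit A with hωdef
  obtain ⟨a0, ha0⟩ := hA.nonempty
  have hnat : Filter.Tendsto (fun n : ℕ => t₀ + (n:ℝ)) Filter.atTop Filter.atTop :=
    tendsto_atTop_add_const_left _ t₀ tendsto_natCast_atTop_atTop
  have hne : ω.Nonempty := by
    obtain ⟨y, hy, -⟩ := extract_aux φ hac A t₀ ht₀ hbdd (fun _ => a0)
      (fun n => t₀ + n) (fun _ => ha0)
      (fun n => le_add_of_nonneg_right (Nat.cast_nonneg n)) hnat
    exact ⟨y, hy⟩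
  have hcomp : IsCompact ω := by
    have hseq : IsSeqCompact ω := by
      intro y hy
      have hchoice : ∀ m : ℕ, ∃ x ∈ A, ∃ τ : ℝ, t₀ + m ≤ τ ∧
          dist (φ.toFun τ x) (y m) < 1 / (m + 1) := by
        intro m
        obtain ⟨xs, ts, hxs, hts0, htstop, hlim⟩ := hy m
        have h1 : ∀ᶠ n in Filter.atTop, t₀ + (m:ℝ) ≤ ts n := htstop.eventually_ge_atTop _
        have h2 : ∀ᶠ n in Filter.atTop,
            dist (φ.toFun (ts n) (xs n)) (y m) < 1 / (m + 1) := by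
          obtain ⟨N, hN⟩ := Metric.tendsto_atTop.1 hlim (1 / (m + 1)) (by positivity)
          exact Filter.eventually_atTop.2 ⟨N, hN⟩
        obtain ⟨n, hn1, hn2⟩ := (h1.and h2).exists
        exact ⟨xs n, hxs n, ts n, hn1, hn2⟩
      choose x hxA τ hτge hdist using hchoice
      obtain ⟨z, hz, k, hk, hkz⟩ := extract_aux φ hac A t₀ ht₀ hbdd x τ hxA
        (fun n => le_trans (le_add_of_nonneg_right (Nat.cast_nonneg n)) (hτge n))
        (Filter.tendsto_atTop_mono hτge hnat)
      refine ⟨z, hz, k, hk, tendsto_iff_dist_tendsto_zero.2 ?_⟩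
      have hb : ∀ n, dist (y (k n)) z ≤ 1 / (n + 1) +
          dist (φ.toFun (τ (k n)) (x (k n))) z := by
        intro n
        calc dist (y (k n)) z
            ≤ dist (y (k n)) (φ.toFun (τ (k n)) (x (k n))) +
              dist (φ.toFun (τ (k n)) (x (k n))) z := dist_triangle _ _ _
          _ ≤ 1 / (n + 1) + dist (φ.toFun (τ (k n)) (x (k n))) z := by
              have h1 : dist (y (k n)) (φ.toFun (τ (k n)) (x (k n))) < 1 / ((k n : ℝ) + 1) := by
                rw [dist_comm]; exact hdist (k n)
              have h2 : (1:ℝ) / ((k n : ℝ) + 1) ≤ 1 / ((n:ℝ) + 1) := by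
                have : (n:ℝ) ≤ (k n : ℝ) := by exact_mod_cast hk.le_apply
                gcongr
              linarith
      have hlim0 : Filter.Tendsto (fun n : ℕ => 1 / ((n:ℝ) + 1) +
          dist (φ.toFun (τ (k n)) (x (k n))) z) Filter.atTop (nhds 0) := by
        have h1 : Filter.Tendsto (fun n : ℕ => 1 / ((n:ℝ) + 1)) Filter.atTop (nhds 0) :=
          tendsto_one_div_add_atTop_nhds_zero_nat
        have h2 : Filter.Tendsto (fun n => dist (φ.toFun (τ (k n)) (x (k n))) z)
            Filter.atTop (nhds 0) := tendsto_iff_dist_tendsto_zero.1 hkz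
        simpa using h1.add h2
      exact squeeze_zero (fun n => dist_nonneg) hb hlim0
    exact hseq.isCompact
  have hattr : ∀ ε > (0:ℝ), ∃ T, t₀ ≤ T ∧
      ∀ t ≥ T, ∀ x ∈ A, Metric.infDist (φ.toFun t x) ω < ε := by
    intro ε hε
    by_contra hcon
    push_neg at hcon
    have hch : ∀ n : ℕ, ∃ t, t₀ + (n:ℝ) ≤ t ∧ ∃ x ∈ A,
        ε ≤ Metric.infDist (φ.toFun t x) ω := by
      intro n
      obtain ⟨t, ht, xx, hxx, hd⟩ := hcon (t₀ + n) (le_add_of_nonneg_right (Nat.cast_nonneg n))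
      exact ⟨t, ht, xx, hxx, hd⟩
    choose τ hτge x hxA hxd using hch
    obtain ⟨z, hz, k, hk, hkz⟩ := extract_aux φ hac A t₀ ht₀ hbdd x τ hxA
      (fun n => le_trans (le_add_of_nonneg_right (Nat.cast_nonneg n)) (hτge n))
      (Filter.tendsto_atTop_mono hτge hnat)
    have hc : Filter.Tendsto (fun n => Metric.infDist (φ.toFun (τ (k n)) (x (k n))) ω)
        Filter.atTop (nhds (Metric.infDist z ω)) :=
      ((Metric.continuous_infDist_pt ω).tendsto z).comp hkz
    have h0 : Metric.infDist z ω = 0 := Metric.infDist_zero_of_mem hz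
    have hε0 : ε ≤ 0 := by
      have := ge_of_tendsto hc (Filter.Eventually.of_forall fun n => hxd (k n))
      rwa [h0] at this
    linarith
  refine ⟨hne, ?_⟩
  rintro u v hu hv hcov ⟨a, haω, hau⟩ ⟨b, hbω, hbv⟩
  by_contra hcon
  rw [Set.not_nonempty_iff_eq_empty] at hcon
  set K₁ := ω ∩ vᶜ with hK₁def
  set K₂ := ω ∩ uᶜ with hK₂def
  have hnotuv : ∀ z ∈ ω, z ∈ u → z ∈ v → False := by
    intro z hz hzu hzv
    exact Set.eq_empty_iff_forall_notMem.1 hcon z ⟨hz, hzu, hzv⟩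
  have hsub1 : ω ∩ u ⊆ K₁ := fun z ⟨hz, hzu⟩ => ⟨hz, fun hzv => hnotuv z hz hzu hzv⟩
  have hsub2 : ω ∩ v ⊆ K₂ := fun z ⟨hz, hzv⟩ => ⟨hz, fun hzu => hnotuv z hz hzu hzv⟩
  have hK₁comp : IsCompact K₁ := hcomp.inter_right hv.isClosed_compl
  have hK₂comp : IsCompact K₂ := hcomp.inter_right hu.isClosed_compl
  have haK₁ : a ∈ K₁ := hsub1 ⟨haω, hau⟩
  have hbK₂ : b ∈ K₂ := hsub2 ⟨hbω, hbv⟩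
  have hdisjK : Disjoint K₁ K₂ := by
    rw [Set.disjoint_left]
    rintro z ⟨hz, hzv⟩ ⟨-, hzu⟩
    rcases hcov hz with h | h
    · exact hzu h
    · exact hzv h
  obtain ⟨δ, hδ, hdisj⟩ := hdisjK.exists_thickenings hK₁comp hK₂comp.isClosed
  obtain ⟨T, hTt₀, hT⟩ := hattr δ hδ
  have hpick : ∀ c ∈ ω, ∃ p ∈ A, ∃ t, T ≤ t ∧ dist (φ.toFun t p) c < δ := by
    intro c hc
    obtain ⟨xs, ts, hxs, hts0, htstop, hlim⟩ := hc
    have h1 : ∀ᶠ n in Filter.atTop, T ≤ ts n := htstop.eventually_ge_atTop T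
    have h2 : ∀ᶠ n in Filter.atTop, dist (φ.toFun (ts n) (xs n)) c < δ := by
      obtain ⟨N, hN⟩ := Metric.tendsto_atTop.1 hlim δ hδ
      exact Filter.eventually_atTop.2 ⟨N, hN⟩
    obtain ⟨n, hn1, hn2⟩ := (h1.and h2).exists
    exact ⟨xs n, hxs n, ts n, hn1, hn2⟩
  obtain ⟨pa, hpa, ta, hta, hda⟩ := hpick a haω
  obtain ⟨pb, hpb, tb, htb, hdb⟩ := hpick b hbω
  have hTt : ∀ t ∈ Set.uIcc ta tb, T ≤ t := by
    intro t ht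
    rcases Set.mem_uIcc.1 ht with ⟨h, -⟩ | ⟨h, -⟩
    · exact le_trans hta h
    · exact le_trans htb h
  set C := (fun p : ℝ × X => φ.toFun p.1 p.2) '' (Set.uIcc ta tb ×ˢ A) with hCdef
  have hCconn : IsPreconnected C := by
    refine (isPreconnected_uIcc.prod hA.isPreconnected).image _ (φ.continuousOn.mono ?_)
    rintro ⟨t, p⟩ ⟨ht, -⟩
    exact ⟨le_trans (le_trans ht₀.le hTt₀) (hTt t ht), Set.mem_univ _⟩
  have hCsub : C ⊆ Metric.thickening δ K₁ ∪ Metric.thickening δ K₂ := by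
    rintro _ ⟨⟨t, p⟩, ⟨ht, hp⟩, rfl⟩
    have hlt : Metric.infDist (φ.toFun t p) ω < δ := hT t (hTt t ht) p hp
    obtain ⟨w, hw, hdw⟩ := (Metric.infDist_lt_iff hne).1 hlt
    rcases hcov hw with hwu | hwv
    · exact Or.inl (Metric.mem_thickening_iff.2 ⟨w, hsub1 ⟨hw, hwu⟩, hdw⟩)
    · exact Or.inr (Metric.mem_thickening_iff.2 ⟨w, hsub2 ⟨hw, hwv⟩, hdw⟩)
  have hmemCa : φ.toFun ta pa ∈ C := ⟨(ta, pa), ⟨Set.left_mem_uIcc, hpa⟩, rfl⟩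
  have hmemCb : φ.toFun tb pb ∈ C := ⟨(tb, pb), ⟨Set.right_mem_uIcc, hpb⟩, rfl⟩
  have hmemUa : φ.toFun ta pa ∈ Metric.thickening δ K₁ :=
    Metric.mem_thickening_iff.2 ⟨a, haK₁, hda⟩
  have hmemVb : φ.toFun tb pb ∈ Metric.thickening δ K₂ :=
    Metric.mem_thickening_iff.2 ⟨b, hbK₂, hdb⟩
  obtain ⟨z, -, hz1, hz2⟩ := hCconn _ _ Metric.isOpen_thickening Metric.isOpen_thickening
    hCsub ⟨_, hmemCa, hmemUa⟩ ⟨_, hmemCb, hmemVb⟩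
  exact Set.disjoint_left.1 hdisj hz1 hz2
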